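/- Suppose X_F ⊆ X_S, let P̃_S = ⋃ₙ P⁽ⁿ⁾ and P_S = { x ∈ X_S : ∃x̃ ∈ P̃_S with ‖x̃ − x‖ ≤ ε }, and assume X₀ ⊆ P_S. Then for every x₀ ∈ X₀ and every x̃₀ ∈ P̃_S with ‖x̃₀ − x₀‖ ≤ ε, every trajectory of the closed-loop system generated by the following refined self-triggered scheme achieves reachability and safety: at each communication time k_ℓ (k₀ = 0), choose any (ũ_ℓ, m_ℓ) ∈ C̃(x̃_ℓ), apply the input ũ_ℓ constantly for m_ℓ steps so that x_{k_ℓ + p} = φ(x_{k_ℓ}, ũ_ℓ, p) for p ∈ {1,…,m_ℓ} and k_{ℓ+1} = k_ℓ + m_ℓ, and choose any x̃_{ℓ+1} ∈ G̃(x̃_ℓ, ũ_ℓ, m_ℓ) with ‖x̃_{ℓ+1} − x_{k_{ℓ+1}}‖ ≤ ε (such a point exists, e.g., any nearest grid point to x_{k_{ℓ+1}}). Namely, there exists N ≤ ℒ(x̃₀) such that x_{k_N} ∈ X_F and x_k ∈ X_S for all k ∈ {0, 1, …, k_N}. (Theorem 1 of the paper: the controller refined from the symbolic controller C̃ is valid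 for the system x_{k+1} = f(x_k, u_k) with specification (X_S, X_F) whenever X₀ ⊆ P_S.) -/

import Mathlib

/-- The Euclidean state space ℝⁿ. -/
abbrev Euc (n : ℕ) := EuclideanSpace ℝ (Fin n)

/-- `phi f x u m` is the state reached from `x` by applying the input `u`
constantly for `m` time steps, i.e. the `m`-fold iterate of `y ↦ f y u` at `x`. -/
def phi {n nu : ℕ} (f : Euc n → Euc nu → Euc n) (x : Euc n) (u : Euc nu) (m : ℕ) : Euc n :=
  (fun y => f y u)^[m] x

/-- The grid `Λ_η ⊆ ℝⁿ`: points whose coordinates are integer multiples of `2η/√n`. -/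
def grid (n : ℕ) (η : ℝ) : Set (Euc n) :=
  { y | ∀ i : Fin n, ∃ a : ℤ, y i = (2 * η / Real.sqrt n) * (a : ℝ) }

/-- Symbolic transition map: `G̃(x̃,ũ,m) = { x̃⁺ ∈ Λ_{η_x} : ‖x̃⁺ − φ(x̃,ũ,m)‖ ≤ Lᵐ ε + η_x }`. -/
def Gt {n nu : ℕ} (f : Euc n → Euc nu → Euc n) (L ε ηx : ℝ)
    (xt : Euc n) (ut : Euc nu) (m : ℕ) : Set (Euc n) :=
  { x' | x' ∈ grid n ηx ∧ ‖x' - phi f xt ut m‖ ≤ L ^ m * ε + ηx }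

/-- `Int_ε(A)`: points of `A` whose closed `ε`-ball is contained in `A`. -/
def IntEps {n : ℕ} (ε : ℝ) (A : Set (Euc n)) : Set (Euc n) :=
  { x ∈ A | Metric.closedBall x ε ⊆ A }

/-- The predecessor map `Pre(P)` of the reachability game. -/
def Pre {n nu : ℕ} (f : Euc n → Euc nu → Euc n) (L ε ηx : ℝ)
    (Ut : Set (Euc nu)) (Mmax : ℕ) (XtS : Set (Euc n)) (P : Set (Euc n)) : Set (Euc n) :=
  { xt ∈ XtS | ∃ ut ∈ Ut, ∃ m : ℕ, 1 ≤ m ∧ m ≤ Mmax ∧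
      Gt f L ε ηx xt ut m ⊆ P ∧ ∀ p : ℕ, 1 ≤ p → p ≤ m → Gt f L ε ηx xt ut p ⊆ XtS }

/-- The iteration `P⁽⁰⁾ = X̃_F`, `P⁽ⁿ⁺¹⁾ = P⁽ⁿ⁾ ∪ Pre(P⁽ⁿ⁾)` of Algorithm 1. -/
def Pseq {n nu : ℕ} (f : Euc n → Euc nu → Euc n) (L ε ηx : ℝ)
    (Ut : Set (Euc nu)) (Mmax : ℕ) (XtS XtF : Set (Euc n)) : ℕ → Set (Euc n)
  | 0 => XtF
  | k + 1 => Pseq f L ε ηx Ut Mmax XtS XtF k ∪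
      Pre f L ε ηx Ut Mmax XtS (Pseq f L ε ηx Ut Mmax XtS XtF k)

/-- The rank `ℒ(x̃) ∈ ℕ ∪ {∞}` : the least `k` with `x̃ ∈ P⁽ᵏ⁾` (and `∞` if there is none). -/
noncomputable def rankL {n nu : ℕ} (f : Euc n → Euc nu → Euc n) (L ε ηx : ℝ)
    (Ut : Set (Euc nu)) (Mmax : ℕ) (XtS XtF : Set (Euc n)) (xt : Euc n) : ℕ∞ :=
  sInf ((fun k : ℕ => (k : ℕ∞)) '' { k : ℕ | xt ∈ Pseq f L ε ηx Ut Mmax XtS XtF k })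

/-- The symbolic controller `C̃`. -/
def Ct {n nu : ℕ} (f : Euc n → Euc nu → Euc n) (L ε ηx : ℝ)
    (Ut : Set (Euc nu)) (Mmax : ℕ) (XtS XtF : Set (Euc n)) (xt : Euc n) :
    Set (Euc nu × ℕ) :=
  { um | um.1 ∈ Ut ∧ 1 ≤ um.2 ∧ um.2 ≤ Mmax ∧
      (∀ x' ∈ Gt f L ε ηx xt um.1 um.2,
        rankL f L ε ηx Ut Mmax XtS XtF x' < rankL f L ε ηx Ut Mmax XtS XtF xt) ∧
      ∀ p : ℕ, 1 ≤ p → p ≤ um.2 → Gt f L ε ηx xt um.1 p ⊆ XtS }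

lemma phi_lip {n nu : ℕ} {U : Set (Euc nu)} {f : Euc n → Euc nu → Euc n} {L : ℝ} (hL : 0 ≤ L)
    (hf : ∀ x₁ x₂ : Euc n, ∀ u ∈ U, ‖f x₁ u - f x₂ u‖ ≤ L * ‖x₁ - x₂‖)
    {u : Euc nu} (hu : u ∈ U) (x₁ x₂ : Euc n) (p : ℕ) :
    ‖phi f x₁ u p - phi f x₂ u p‖ ≤ L ^ p * ‖x₁ - x₂‖ := by
  induction p with
  | zero => simp [phi]
  | succ q ih =>
    have h1 : phi f x₁ u (q+1) = f (phi f x₁ u q) u := Function.iterate_succ_apply' _ _ _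
    have h2 : phi f x₂ u (q+1) = f (phi f x₂ u q) u := Function.iterate_succ_apply' _ _ _
    rw [h1, h2]
    calc ‖f (phi f x₁ u q) u - f (phi f x₂ u q) u‖
        ≤ L * ‖phi f x₁ u q - phi f x₂ u q‖ := hf _ _ u hu
      _ ≤ L * (L ^ q * ‖x₁ - x₂‖) := mul_le_mul_of_nonneg_left ih hL
      _ = L ^ (q+1) * ‖x₁ - x₂‖ := by ring

lemma Pseq_mono {n nu : ℕ} (f : Euc n → Euc nu → Euc n) (L ε ηx : ℝ)
    (Ut : Set (Euc nu)) (Mmax : ℕ) (XtS XtF : Set (Euc n)) :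
    Monotone (Pseq f L ε ηx Ut Mmax XtS XtF) := by
  apply monotone_nat_of_le_succ
  intro k
  exact Set.subset_union_left

lemma rankL_le_iff {n nu : ℕ} (f : Euc n → Euc nu → Euc n) (L ε ηx : ℝ)
    (Ut : Set (Euc nu)) (Mmax : ℕ) (XtS XtF : Set (Euc n)) (xt : Euc n) (k : ℕ) :
    rankL f L ε ηx Ut Mmax XtS XtF xt ≤ (k : ℕ∞) ↔
      xt ∈ Pseq f L ε ηx Ut Mmax XtS XtF k := by
  constructor
  · intro h
    by_contra hmem
    have hlb : ((k : ℕ∞) + 1) ≤ rankL f L ε ηx Ut Mmax XtS XtF xt := by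
      apply le_sInf
      rintro s ⟨j, hj, rfl⟩
      have hkj : k < j := by
        by_contra hle
        exact hmem (Pseq_mono f L ε ηx Ut Mmax XtS XtF (not_lt.1 hle) hj)
      have : (k : ℕ∞) < (j : ℕ∞) := by exact_mod_cast hkj
      exact Order.add_one_le_of_lt this
    have h2 : (k : ℕ∞) + 1 ≤ (k : ℕ∞) := hlb.trans h
    rw [← Nat.cast_one, ← Nat.cast_add, Nat.cast_le] at h2
    omega
  · intro h
    exact sInf_le ⟨k, h, rfl⟩

lemma grid_nearest {n : ℕ} (hn : 1 ≤ n) {η : ℝ} (hη : 0 < η) (z : Euc n) :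
    ∃ y ∈ grid n η, ‖y - z‖ ≤ η := by
  have hsn : (0:ℝ) < Real.sqrt n := Real.sqrt_pos.2 (by exact_mod_cast Nat.pos_of_ne_zero (by omega))
  set c : ℝ := 2 * η / Real.sqrt n with hc
  have hcpos : 0 < c := by positivity
  set y : Euc n := (WithLp.toLp 2 (fun i => c * round (z i / c)) : Euc n) with hy
  have hyi : ∀ i : Fin n, y i = c * round (z i / c) := fun i => rfl
  refine ⟨y, fun i => ⟨round (z i / c), hyi i⟩, ?_⟩
  have hcoord : ∀ i : Fin n, |y i - z i| ≤ η / Real.sqrt n := by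
    intro i
    have h1 : y i - z i = c * ((round (z i / c) : ℝ) - z i / c) := by
      rw [hyi i]; field_simp
    rw [h1, abs_mul, abs_of_pos hcpos, abs_sub_comm]
    calc c * |z i / c - (round (z i / c) : ℝ)| ≤ c * (1/2) :=
          mul_le_mul_of_nonneg_left (abs_sub_round _) hcpos.le
      _ = η / Real.sqrt n := by rw [hc]; ring
  have hnorm : ‖y - z‖ ^ 2 ≤ η ^ 2 := by
    rw [EuclideanSpace.norm_eq, Real.sq_sqrt (by positivity)]
    calc (∑ i, ‖(y - z) i‖ ^ 2)
        ≤ ∑ _i : Fin n, (η / Real.sqrt n) ^ 2 := by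
          apply Finset.sum_le_sum
          intro i _
          have h2 : (y - z) i = y i - z i := rfl
          rw [h2, Real.norm_eq_abs]
          exact pow_le_pow_left₀ (abs_nonneg _) (hcoord i) 2
      _ = η ^ 2 := by
          rw [Finset.sum_const, Finset.card_univ, Fintype.card_fin, nsmul_eq_mul,
            div_pow, Real.sq_sqrt (by positivity)]
          field_simp
  nlinarith [norm_nonneg (y - z), hη.le]

/-- Theorem 1: the controller refined from the symbolic controller `C̃` is valid for
the system `x_{k+1} = f(x_k,u_k)` with specification `(X_S, X_F)` whenever
`X₀ ⊆ P_S = { x ∈ X_S : ∃ x̃ ∈ P̃_S, ‖x̃ − x‖ ≤ ε }`, `P̃_S = ⋃ₙ P⁽ⁿ⁾`. Closed loop: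
at round `ℓ` (communication times `k₀ = 0`, `k_{ℓ+1} = k_ℓ + m_ℓ`), pick any
`(ũ_ℓ, m_ℓ) ∈ C̃(x̃_ℓ)`, apply `ũ_ℓ` constantly so `x_{k_ℓ+p} = φ(x_{k_ℓ},ũ_ℓ,p)`,
and pick any `x̃_{ℓ+1} ∈ G̃(x̃_ℓ,ũ_ℓ,m_ℓ)` with `‖x̃_{ℓ+1} − x_{k_{ℓ+1}}‖ ≤ ε`. Then
there is `N ≤ ℒ(x̃₀)` with `x_{k_N} ∈ X_F` and `x_k ∈ X_S` for all `k ≤ k_N`. -/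
theorem refined_controller_valid {n nu : ℕ} (hn : 1 ≤ n)
    (X₀ : Set (Euc n)) (U : Set (Euc nu))
    (f : Euc n → Euc nu → Euc n) (L : ℝ) (hL : 0 ≤ L)
    (hf : ∀ x₁ x₂ : Euc n, ∀ u ∈ U, ‖f x₁ u - f x₂ u‖ ≤ L * ‖x₁ - x₂‖)
    (ηx ηu : ℝ) (hηx : 0 < ηx) (hηu : 0 < ηu)
    (ε : ℝ) (hε : ηx ≤ ε) (Mmax : ℕ) (hM : 1 ≤ Mmax)
    (XS XF : Set (Euc n)) (hFS : XF ⊆ XS)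
    (Ut : Set (Euc nu)) (hUt : Ut = grid nu ηu ∩ U)
    (XtS : Set (Euc n)) (hXtS : XtS = grid n ηx ∩ IntEps ε XS)
    (XtF : Set (Euc n)) (hXtF : XtF = grid n ηx ∩ IntEps ε XF)
    -- the winning sets `P̃_S` and `P_S`, and the initial condition `X₀ ⊆ P_S`
    (PtS : Set (Euc n)) (hPtS : PtS = ⋃ k : ℕ, Pseq f L ε ηx Ut Mmax XtS XtF k)
    (PS : Set (Euc n)) (hPS : PS = { x ∈ XS | ∃ xt ∈ PtS, ‖xt - x‖ ≤ ε })
    (hX0 : X₀ ⊆ PS)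
    -- the initial state and a related initial symbolic state
    (x0 : Euc n) (hx0 : x0 ∈ X₀)
    (xt0 : Euc n) (hxt0 : xt0 ∈ PtS) (hclose0 : ‖xt0 - x0‖ ≤ ε)
    -- a closed-loop trajectory generated by the refined self-triggered scheme
    (x : ℕ → Euc n) (hx : x 0 = x0)
    (xts : ℕ → Euc n) (hxts : xts 0 = xt0)
    (kt : ℕ → ℕ) (hk0 : kt 0 = 0)
    (u : ℕ → Euc nu) (ms : ℕ → ℕ)
    (hstep : ∀ ℓ : ℕ, (ℓ : ℕ∞) < rankL f L ε ηx Ut Mmax XtS XtF xt0 →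
      (u ℓ, ms ℓ) ∈ Ct f L ε ηx Ut Mmax XtS XtF (xts ℓ) ∧
      kt (ℓ + 1) = kt ℓ + ms ℓ ∧
      (∀ p : ℕ, 1 ≤ p → p ≤ ms ℓ → x (kt ℓ + p) = phi f (x (kt ℓ)) (u ℓ) p) ∧
      xts (ℓ + 1) ∈ Gt f L ε ηx (xts ℓ) (u ℓ) (ms ℓ) ∧
      ‖xts (ℓ + 1) - x (kt (ℓ + 1))‖ ≤ ε) :
    -- reachability and safety: the trajectory reaches `X_F` within `ℒ(x̃₀)` rounds,
    -- staying in `X_S` at all times until then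
    ∃ N : ℕ, (N : ℕ∞) ≤ rankL f L ε ηx Ut Mmax XtS XtF xt0 ∧
      x (kt N) ∈ XF ∧ ∀ k : ℕ, k ≤ kt N → x k ∈ XS := by

  set Rk : Euc n → ℕ∞ := rankL f L ε ηx Ut Mmax XtS XtF with hRk
  -- the initial rank is finite
  have hx0PS : x0 ∈ PS := hX0 hx0
  have hx0XS : x0 ∈ XS := by rw [hPS] at hx0PS; exact hx0PS.1
  obtain ⟨k0, hk0mem⟩ : ∃ k : ℕ, xt0 ∈ Pseq f L ε ηx Ut Mmax XtS XtF k := by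
    rw [hPtS] at hxt0; exact Set.mem_iUnion.mp hxt0
  have hfin : Rk xt0 ≠ ⊤ := by
    have : Rk xt0 ≤ (k0 : ℕ∞) := (rankL_le_iff f L ε ηx Ut Mmax XtS XtF xt0 k0).mpr hk0mem
    exact ne_top_of_le_ne_top (by simp) this
  obtain ⟨R0, hR0⟩ : ∃ R0 : ℕ, Rk xt0 = (R0 : ℕ∞) := by
    lift Rk xt0 to ℕ using hfin with R0 hR0
    exact ⟨R0, rfl⟩
  -- the key invariant
  have key : ∀ ℓ : ℕ, (∀ j, j < ℓ → Rk (xts j) ≠ 0) →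
      Rk (xts ℓ) + (ℓ : ℕ∞) ≤ (R0 : ℕ∞) ∧ ‖xts ℓ - x (kt ℓ)‖ ≤ ε ∧
      ∀ k : ℕ, k ≤ kt ℓ → x k ∈ XS := by
    intro ℓ
    induction ℓ with
    | zero =>
      intro _
      refine ⟨by rw [hxts]; simpa using hR0.le, ?_, ?_⟩
      · rw [hxts, hk0, hx]; exact hclose0
      · intro k hk
        have hk' : k = 0 := by omega
        rw [hk', hx]; exact hx0XS
    | succ ℓ ih =>
      intro hall
      obtain ⟨hrle, hcl, hsafe⟩ := ih (fun j hj => hall j (by omega))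
      have hrne : Rk (xts ℓ) ≠ 0 := hall ℓ (by omega)
      have h1 : (1 : ℕ∞) ≤ Rk (xts ℓ) := ENat.one_le_iff_ne_zero.mpr hrne
      have hlt : (ℓ : ℕ∞) < Rk xt0 := by
        have h2 : (1 : ℕ∞) + ℓ ≤ (R0 : ℕ∞) :=
          le_trans (add_le_add_left h1 (ℓ : ℕ∞)) hrle
        have h3 : ((1 + ℓ : ℕ) : ℕ∞) ≤ (R0 : ℕ∞) := by push_cast; exact h2
        rw [Nat.cast_le] at h3
        rw [hR0]
        exact_mod_cast by omega
      obtain ⟨hctrl, hkeq, hxeq, hGt, hcl'⟩ := hstep ℓ hlt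
      obtain ⟨huU, hm1, hmM, hdec, hsafeG⟩ := hctrl
      have huU' : u ℓ ∈ U := by rw [hUt] at huU; exact huU.2
      -- rank decreases
      have hdec' : Rk (xts (ℓ+1)) < Rk (xts ℓ) := hdec _ hGt
      have hstep1 : Rk (xts (ℓ+1)) + 1 ≤ Rk (xts ℓ) := Order.add_one_le_of_lt hdec'
      refine ⟨?_, hcl', ?_⟩
      · calc Rk (xts (ℓ+1)) + ((ℓ+1 : ℕ) : ℕ∞)
            = (Rk (xts (ℓ+1)) + 1) + (ℓ : ℕ∞) := by
              push_cast; rw [add_comm (ℓ : ℕ∞) 1, ← add_assoc]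
          _ ≤ Rk (xts ℓ) + (ℓ : ℕ∞) := add_le_add_left hstep1 _
          _ ≤ (R0 : ℕ∞) := hrle
      · intro k hk
        rw [hkeq] at hk
        by_cases hkle : k ≤ kt ℓ
        · exact hsafe k hkle
        · push_neg at hkle
          set p := k - kt ℓ with hp
          have hp1 : 1 ≤ p := by omega
          have hpm : p ≤ ms ℓ := by omega
          have hkp : k = kt ℓ + p := by omega
          have hxk : x k = phi f (x (kt ℓ)) (u ℓ) p := by
            rw [hkp]; exact hxeq p hp1 hpm
          obtain ⟨y, hy, hynear⟩ := grid_nearest hn hηx (x k)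
          have hyGt : y ∈ Gt f L ε ηx (xts ℓ) (u ℓ) p := by
            refine ⟨hy, ?_⟩
            have hphi : ‖x k - phi f (xts ℓ) (u ℓ) p‖ ≤ L ^ p * ε := by
              rw [hxk]
              calc ‖phi f (x (kt ℓ)) (u ℓ) p - phi f (xts ℓ) (u ℓ) p‖
                  ≤ L ^ p * ‖x (kt ℓ) - xts ℓ‖ := phi_lip hL hf huU' _ _ p
                _ ≤ L ^ p * ε := by
                    apply mul_le_mul_of_nonneg_left _ (pow_nonneg hL p)
                    rw [norm_sub_rev]; exact hcl
            calc ‖y - phi f (xts ℓ) (u ℓ) p‖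
                ≤ ‖y - x k‖ + ‖x k - phi f (xts ℓ) (u ℓ) p‖ := norm_sub_le_norm_sub_add_norm_sub _ _ _
              _ ≤ ηx + L ^ p * ε := add_le_add hynear hphi
              _ = L ^ p * ε + ηx := by ring
          have hyXtS : y ∈ XtS := hsafeG p hp1 hpm hyGt
          rw [hXtS] at hyXtS
          apply hyXtS.2.2
          rw [Metric.mem_closedBall, dist_eq_norm, norm_sub_rev]
          exact hynear.trans hε
  -- existence of a round with rank zero
  by_cases hall : ∀ ℓ : ℕ, Rk (xts ℓ) ≠ 0
  · exfalso
    obtain ⟨hrle, _, _⟩ := key (R0 + 1) (fun j _ => hall j)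
    have h4 : ((R0 + 1 : ℕ) : ℕ∞) ≤ (R0 : ℕ∞) := le_trans (le_add_self) hrle
    rw [Nat.cast_le] at h4
    omega
  · push_neg at hall
    have hex : ∃ ℓ : ℕ, Rk (xts ℓ) = 0 := hall
    classical
    set N := Nat.find hex with hN
    have hN0 : Rk (xts N) = 0 := Nat.find_spec hex
    have hmin : ∀ j, j < N → Rk (xts j) ≠ 0 := fun j hj => Nat.find_min hex hj
    obtain ⟨hrle, hcl, hsafe⟩ := key N hmin
    have hNR0 : (N : ℕ∞) ≤ (R0 : ℕ∞) := by
      calc (N : ℕ∞) = Rk (xts N) + (N : ℕ∞) := by rw [hN0, zero_add]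
        _ ≤ (R0 : ℕ∞) := hrle
    refine ⟨N, by rw [hR0]; exact hNR0, ?_, hsafe⟩
    have hmem : xts N ∈ Pseq f L ε ηx Ut Mmax XtS XtF 0 := by
      have : Rk (xts N) ≤ ((0 : ℕ) : ℕ∞) := by rw [hN0]; simp
      exact (rankL_le_iff f L ε ηx Ut Mmax XtS XtF (xts N) 0).mp this
    have hXtFmem : xts N ∈ XtF := hmem
    rw [hXtF] at hXtFmem
    apply hXtFmem.2.2
    rw [Metric.mem_closedBall, dist_eq_norm, norm_sub_rev]
    exact hcl
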